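/- Suppose C is a (2,M,q) code satisfying conditions (I) and (II). If C₁, C₂ ⊆ C with |C₁| ≤ 2, |C₂| ≤ 2, C₁ ≠ C₂ and desc(C₁) = desc(C₂), then a contradiction arises; i.e., distinct sub-codes of size at most 2 have distinct descendant codes (C is 2̄-separable). -/
import Mathlib


/-- The descendant code of a sub-code of a code of length 2, viewed as a set of pairs. -/
def desc2 {q : ℕ} (C' : Finset (Fin q × Fin q)) : Set (Fin q × Fin q) :=
  {x | (∃ c ∈ C', c.1 = x.1) ∧ (∃ c ∈ C', c.2 = x.2)}

/-- `C` is a `t`-MIPPC of length 2: for every descendant set produced by some nonempty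
sub-code of size at most `t`, all such parent sets have a common codeword. -/
def isMIPPC2 {q : ℕ} (t : ℕ) (C : Finset (Fin q × Fin q)) : Prop :=
  ∀ S : Set (Fin q × Fin q),
    (∃ C' : Finset (Fin q × Fin q), C' ⊆ C ∧ C'.Nonempty ∧ C'.card ≤ t ∧ desc2 C' = S) →
    ∃ c, ∀ C' : Finset (Fin q × Fin q),
      C' ⊆ C → C'.Nonempty → C'.card ≤ t → desc2 C' = S → c ∈ C'

/-- `A¹_a = {b : (a,b) ∈ C}`. -/
def A1 {q : ℕ} (C : Finset (Fin q × Fin q)) (a : Fin q) : Finset (Fin q) :=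
  (C.filter (fun c => c.1 = a)).image Prod.snd

/-- Condition (I). -/
def CondI {q : ℕ} (C : Finset (Fin q × Fin q)) : Prop :=
  ∀ a₁ a₂ : Fin q, a₁ ≠ a₂ → (A1 C a₁ ∩ A1 C a₂).card ≤ 1

/-- Condition (II). -/
def CondII {q : ℕ} (C : Finset (Fin q × Fin q)) : Prop :=
  ¬ ∃ a₁ a₂ a₃ b₁ b₂ b₃ : Fin q,
      a₁ ≠ a₂ ∧ a₁ ≠ a₃ ∧ a₂ ≠ a₃ ∧ b₁ ≠ b₂ ∧ b₁ ≠ b₃ ∧ b₂ ≠ b₃ ∧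
      b₁ ∈ A1 C a₁ ∧ b₂ ∈ A1 C a₁ ∧ b₂ ∈ A1 C a₂ ∧ b₃ ∈ A1 C a₂ ∧
      b₁ ∈ A1 C a₃ ∧ b₃ ∈ A1 C a₃


lemma mem_A1_of {q : ℕ} {C : Finset (Fin q × Fin q)} {a b : Fin q}
    (h : (a, b) ∈ C) : b ∈ A1 C a :=
  Finset.mem_image.mpr ⟨(a, b), Finset.mem_filter.mpr ⟨h, rfl⟩, rfl⟩

lemma mem_desc2_self {q : ℕ} {C' : Finset (Fin q × Fin q)} {c : Fin q × Fin q}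
    (h : c ∈ C') : c ∈ desc2 C' :=
  ⟨⟨c, h, rfl⟩, ⟨c, h, rfl⟩⟩

lemma aux_sep {q : ℕ} (C C₁ C₂ : Finset (Fin q × Fin q)) (hI : CondI C)
    (h₁ : C₁ ⊆ C) (h₂ : C₂ ⊆ C) (hc1 : C₁.card ≤ 2) (hc2 : C₂.card ≤ 2)
    (hd : desc2 C₁ = desc2 C₂) {c : Fin q × Fin q}
    (hcC₁ : c ∈ C₁) (hcC₂ : c ∉ C₂) : False := by
  have hcd : c ∈ desc2 C₂ := hd ▸ mem_desc2_self hcC₁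
  obtain ⟨⟨d, hdC₂, hd1⟩, ⟨e, heC₂, he2⟩⟩ := hcd
  have hd2 : d.2 ≠ c.2 := fun h => hcC₂ (by rwa [show c = d from (Prod.ext hd1 h).symm])
  have he1 : e.1 ≠ c.1 := fun h => hcC₂ (by rwa [show c = e from (Prod.ext h he2).symm])
  have hde : d ≠ e := fun h => he1 (h ▸ hd1)
  -- C₂ = {d, e}
  have hC₂ : C₂ = {d, e} := by
    refine (Finset.eq_of_subset_of_card_le ?_ ?_).symm
    · intro x hx
      rcases Finset.mem_insert.mp hx with h | h
      · exact h ▸ hdC₂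
      · exact (Finset.mem_singleton.mp h) ▸ heC₂
    · rw [Finset.card_insert_of_notMem (by simp [hde]), Finset.card_singleton]
      exact hc2
  -- e ∈ desc2 C₁ gives f ∈ C₁ with f.1 = e.1
  have hed : e ∈ desc2 C₁ := hd.symm ▸ mem_desc2_self heC₂
  obtain ⟨⟨f, hfC₁, hf1⟩, -⟩ := hed
  have hdd : d ∈ desc2 C₁ := hd.symm ▸ mem_desc2_self hdC₂
  obtain ⟨-, ⟨g, hgC₁, hg2⟩⟩ := hdd
  have hfc : f ≠ c := fun h => he1 (by rw [← hf1, h])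
  have hgc : g ≠ c := fun h => hd2 (by rw [← hg2, h])
  have hC₁ : C₁ = {c, f} := by
    refine (Finset.eq_of_subset_of_card_le ?_ ?_).symm
    · intro x hx
      rcases Finset.mem_insert.mp hx with h | h
      · exact h ▸ hcC₁
      · exact (Finset.mem_singleton.mp h) ▸ hfC₁
    · rw [Finset.card_insert_of_notMem (by simp [hfc.symm]), Finset.card_singleton]
      exact hc1
  have hgf : g = f := by
    have := hC₁ ▸ hgC₁
    rcases Finset.mem_insert.mp this with h | h
    · exact absurd h hgc
    · exact Finset.mem_singleton.mp h
  -- the four codewords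
  have m1 : c.2 ∈ A1 C c.1 := mem_A1_of (by rw [Prod.mk.eta]; exact h₁ hcC₁)
  have m2 : d.2 ∈ A1 C c.1 := mem_A1_of (by rw [← hd1, Prod.mk.eta]; exact h₂ hdC₂)
  have m3 : c.2 ∈ A1 C e.1 := mem_A1_of (by rw [← he2, Prod.mk.eta]; exact h₂ heC₂)
  have m4 : d.2 ∈ A1 C e.1 := mem_A1_of (by rw [← hg2, hgf, ← hf1, Prod.mk.eta]; exact h₁ hfC₁)
  have hsub : ({c.2, d.2} : Finset (Fin q)) ⊆ A1 C c.1 ∩ A1 C e.1 := by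
    intro x hx
    rcases Finset.mem_insert.mp hx with h | h
    · exact h ▸ Finset.mem_inter.mpr ⟨m1, m3⟩
    · exact (Finset.mem_singleton.mp h) ▸ Finset.mem_inter.mpr ⟨m2, m4⟩
  have hcard : 2 ≤ (A1 C c.1 ∩ A1 C e.1).card := by
    have h2 : ({c.2, d.2} : Finset (Fin q)).card = 2 := by
      rw [Finset.card_insert_of_notMem (by simp [hd2.symm]), Finset.card_singleton]
    exact h2 ▸ Finset.card_le_card hsub
  exact absurd (hI c.1 e.1 (fun h => he1 h.symm)) (by omega)

/-- A `(2,M,q)` code satisfying conditions (I) and (II) is `2̄`-separable: distinct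
nonempty sub-codes of size at most 2 have distinct descendant codes. -/
theorem sc2_of_condI_condII {q : ℕ} (C : Finset (Fin q × Fin q))
    (hI : CondI C) (hII : CondII C) :
    ∀ C₁ C₂ : Finset (Fin q × Fin q),
      C₁ ⊆ C → C₂ ⊆ C → C₁.Nonempty → C₂.Nonempty → C₁.card ≤ 2 → C₂.card ≤ 2 →
      C₁ ≠ C₂ → desc2 C₁ ≠ desc2 C₂ := by
  intro C₁ C₂ h₁ h₂ _ _ hc1 hc2 hne hd
  by_cases hs : C₁ ⊆ C₂
  · obtain ⟨c, hcm, hcn⟩ := Finset.not_subset.mp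
      (fun hs' => hne (Finset.Subset.antisymm hs hs'))
    exact aux_sep C C₂ C₁ hI h₂ h₁ hc2 hc1 hd.symm hcm hcn
  · obtain ⟨c, hcm, hcn⟩ := Finset.not_subset.mp hs
    exact aux_sep C C₁ C₂ hI h₁ h₂ hc1 hc2 hd hcm hcn
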